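/- Let β ∈ W^{1,1}(I, S²) and assume that for every t₀ ∈ [0,1] there exists ε > 0 such that the restriction of β to [0,1] ∩ (t₀ − ε, t₀ + ε) has bounded geodesic curvature. Then β has bounded geodesic curvature on I. -/

import Mathlib

open MeasureTheory Set Filter Matrix
open scoped RealInnerProductSpace Topology ENNReal NNReal

noncomputable section

/-- Euclidean 3-space. -/
abbrev E3 : Type := EuclideanSpace ℝ (Fin 3)

/-- Cross product on `ℝ³`. -/
def cross3 (v w : E3) : E3 :=
  (WithLp.equiv 2 (Fin 3 → ℝ)).symm
    ![v 1 * w 2 - v 2 * w 1, v 2 * w 0 - v 0 * w 2, v 0 * w 1 - v 1 * w 0]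

/-- The `i`-th row of a 3×3 matrix, as a vector in `ℝ³`; for `r ∈ SO(3)` this is `rᵀ eᵢ`. -/
def row3 (M : Matrix (Fin 3) (Fin 3) ℝ) (i : Fin 3) : E3 :=
  (WithLp.equiv 2 (Fin 3 → ℝ)).symm (M i)

/-- The set of rotation matrices. -/
def SO3 : Set (Matrix (Fin 3) (Fin 3) ℝ) :=
  {M | M * Mᵀ = 1 ∧ M.det = 1}

/-- Lebesgue measure restricted to the unit interval `I = (0,1)`. -/
def muI : Measure ℝ := volume.restrict (Set.Ioo 0 1)

/-- `f` is absolutely continuous on `[a,b]` with (a.e.) derivative `f'` (fundamental theorem of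
calculus form); this encodes `f ∈ W^{1,1}((a,b))` via its continuous representative. -/
def FTCOn (f f' : ℝ → E3) (a b : ℝ) : Prop :=
  IntervalIntegrable f' volume a b ∧
  ∀ t ∈ Set.Icc a b, f t = f a + ∫ s in a..t, f' s

/-- `V` is the parallel transport of `v` along the spherical curve `β` (with derivative `β'`)
on `[a,b]`: the absolutely continuous solution of `V' = -(V·β')β`, `V a = v`, in integral form.
`V t` is the quantity denoted `Π_{β|_(a,t)} v`. -/
def IsParTrans (β β' : ℝ → E3) (a b : ℝ) (v : E3) (V : ℝ → E3) : Prop :=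
  V a = v ∧
  IntervalIntegrable (fun s => ⟪V s, β' s⟫ • β s) volume a b ∧
  ∀ t ∈ Set.Icc a b, V t = v - ∫ s in a..t, ⟪V s, β' s⟫ • β s

/-- An adapted frame of class `W^{1,1}` for the spherical curve `β` (with derivative `β'`)
on `[a,b]`: a map `r : [a,b] → SO(3)` whose rows are in `W^{1,1}` (with derivatives `ρ' i`),
with `r₃ = β` a.e. and `β' × r₁ = 0` a.e. on `(a,b)`. -/
def AdaptedFrameW11 (β β' : ℝ → E3) (a b : ℝ)
    (r : ℝ → Matrix (Fin 3) (Fin 3) ℝ) (ρ' : Fin 3 → ℝ → E3) : Prop :=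
  (∀ i : Fin 3, FTCOn (fun t => row3 (r t) i) (ρ' i) a b) ∧
  (∀ t ∈ Set.Icc a b, r t ∈ SO3) ∧
  (∀ᵐ t ∂(volume.restrict (Set.Ioo a b)), row3 (r t) 2 = β t) ∧
  (∀ᵐ t ∂(volume.restrict (Set.Ioo a b)), cross3 (β' t) (row3 (r t) 0) = 0)

/-- The spherical curve `β` has geodesic curvature `κ` on `[a,b]`: some `W^{1,1}` adapted
frame satisfies `r₁' · r₂ = κ` a.e. -/
def HasGeodCurvOn (β β' : ℝ → E3) (κ : ℝ → ℝ) (a b : ℝ) : Prop :=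
  ∃ r ρ', AdaptedFrameW11 β β' a b r ρ' ∧
    ∀ᵐ t ∂(volume.restrict (Set.Ioo a b)), ⟪ρ' 0 t, row3 (r t) 1⟫ = κ t

/-- The spherical curve `β` has bounded geodesic curvature on `[a,b]`. -/
def BddGeodCurvOn (β β' : ℝ → E3) (a b : ℝ) : Prop :=
  ∃ κ C, (∀ᵐ t ∂(volume.restrict (Set.Ioo a b)), |κ t| ≤ C) ∧ HasGeodCurvOn β β' κ a b


-- ===== auxiliary development =====
section Aux
open Real intervalIntegral

lemma inner_E3 (x y : E3) : ⟪x, y⟫ = x 0 * y 0 + x 1 * y 1 + x 2 * y 2 := by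
  simp [PiLp.inner_apply, Fin.sum_univ_three, RCLike.inner_apply, conj_trivial]
  ring

lemma cross3_apply (v w : E3) (i : Fin 3) : cross3 v w i =
    ![v 1 * w 2 - v 2 * w 1, v 2 * w 0 - v 0 * w 2, v 0 * w 1 - v 1 * w 0] i := rfl

lemma E3_ext (x y : E3) (h : ∀ i, x i = y i) : x = y := (WithLp.equiv 2 (Fin 3 → ℝ)).injective (funext h)

lemma row3_apply (M : Matrix (Fin 3) (Fin 3) ℝ) (i j : Fin 3) : row3 M i j = M i j := rfl

lemma norm_one_E3 (x : E3) (h : ‖x‖ = 1) : x 0 * x 0 + x 1 * x 1 + x 2 * x 2 = 1 := by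
  have h2 : ⟪x,x⟫ = 1 := by rw [real_inner_self_eq_norm_sq, h]; norm_num
  rwa [inner_E3] at h2

lemma cross3_zero_left (w : E3) : cross3 0 w = 0 := by
  apply E3_ext; intro i; fin_cases i <;> simp [cross3_apply] <;> rfl

-- collinearity
lemma collinear_of_cross3 (v w : E3) (hv : v ≠ 0) (h : cross3 v w = 0) :
    w = (⟪v,w⟫ / ⟪v,v⟫) • v := by
  have h0 := congrFun (congrArg WithLp.ofLp h) 0
  have h1 := congrFun (congrArg WithLp.ofLp h) 1
  have h2 := congrFun (congrArg WithLp.ofLp h) 2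
  simp only [cross3_apply] at h0 h1 h2
  have hvv : ⟪v,v⟫ ≠ 0 := by
    intro hz
    exact hv (inner_self_eq_zero.mp hz)
  apply E3_ext; intro i
  have hsm : ∀ (c : ℝ) (x : E3) (j : Fin 3), (c • x) j = c * x j := fun c x j => rfl
  rw [inner_E3] at hvv
  rw [hsm, inner_E3, inner_E3, div_mul_eq_mul_div, eq_div_iff hvv]
  simp at h0 h1 h2
  fin_cases i
  · show w 0 * (v 0*v 0+v 1*v 1+v 2*v 2) = (v 0*w 0+v 1*w 1+v 2*w 2) * v 0
    linear_combination (-(v 1)) * h2 + v 2 * h1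
  · show w 1 * (v 0*v 0+v 1*v 1+v 2*v 2) = (v 0*w 0+v 1*w 1+v 2*w 2) * v 1
    linear_combination v 0 * h2 - v 2 * h0
  · show w 2 * (v 0*v 0+v 1*v 1+v 2*v 2) = (v 0*w 0+v 1*w 1+v 2*w 2) * v 2
    linear_combination (-(v 0)) * h1 + v 1 * h0

-- cross3 is bilinear-ish lemmas
lemma cross3_smul_right (v : E3) (c : ℝ) (w : E3) :
    cross3 v (c • w) = c • cross3 v w := by
  apply E3_ext; intro i
  have hs : ∀ (x : E3) (j : Fin 3), (c • x) j = c * x j := fun x j => rfl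
  fin_cases i <;> simp [cross3_apply, hs] <;> ring

lemma cross3_add_right (v w₁ w₂ : E3) :
    cross3 v (w₁ + w₂) = cross3 v w₁ + cross3 v w₂ := by
  apply E3_ext; intro i
  have hs : ∀ (x y : E3) (j : Fin 3), (x + y) j = x j + y j := fun x y j => rfl
  fin_cases i <;> simp [cross3_apply, hs] <;> ring

lemma cross3_neg_right (v w : E3) : cross3 v (-w) = -cross3 v w := by
  apply E3_ext; intro i
  have hs : ∀ (x : E3) (j : Fin 3), (-x) j = -(x j) := fun x j => rfl
  fin_cases i <;> simp [cross3_apply, hs] <;> ring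

lemma lagrange3 (u w : E3) : cross3 u (cross3 u w) = ⟪u,w⟫ • u - ⟪u,u⟫ • w := by
  apply E3_ext; intro i
  have hs : ∀ (c : ℝ) (x : E3) (j : Fin 3), (c • x) j = c * x j := fun c x j => rfl
  have hsub : ∀ (x y : E3) (j : Fin 3), (x - y) j = x j - y j := fun x y j => rfl
  rw [inner_E3 u w, inner_E3 u u]
  fin_cases i <;> simp [cross3_apply, hs, hsub, inner_E3, Fin.sum_univ_three] <;> ring

-- SO3 facts
lemma SO3.transpose_mul {M : Matrix (Fin 3) (Fin 3) ℝ} (h : M ∈ SO3) : Mᵀ * M = 1 :=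
  mul_eq_one_comm.mp h.1

lemma SO3.mul_mem {M N : Matrix (Fin 3) (Fin 3) ℝ} (hM : M ∈ SO3) (hN : N ∈ SO3) :
    M * N ∈ SO3 := by
  constructor
  · rw [Matrix.transpose_mul, ← Matrix.mul_assoc, Matrix.mul_assoc M, hN.1, Matrix.mul_one, hM.1]
  · rw [Matrix.det_mul, hM.2, hN.2, mul_one]

lemma SO3.inner_rows {M : Matrix (Fin 3) (Fin 3) ℝ} (h : M ∈ SO3) (i j : Fin 3) :
    ⟪row3 M i, row3 M j⟫ = if i = j then (1:ℝ) else 0 := by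
  have := congrFun (congrFun h.1 i) j
  simp only [Matrix.mul_apply, Matrix.transpose_apply, Matrix.one_apply] at this
  rw [inner_E3]
  simp only [row3_apply]
  rw [← this, Fin.sum_univ_three]

lemma SO3.row1_eq {M : Matrix (Fin 3) (Fin 3) ℝ} (h : M ∈ SO3) :
    row3 M 1 = cross3 (row3 M 2) (row3 M 0) := by
  have hadj : Mᵀ = Matrix.adjugate M := by
    have h1 : M * Matrix.adjugate M = 1 := by
      rw [Matrix.mul_adjugate, h.2]; simp
    have h2 : Mᵀ * M = 1 := SO3.transpose_mul h
    calc Mᵀ = Mᵀ * (M * Matrix.adjugate M) := by rw [h1, Matrix.mul_one]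
    _ = (Mᵀ * M) * Matrix.adjugate M := by rw [Matrix.mul_assoc]
    _ = Matrix.adjugate M := by rw [h2, Matrix.one_mul]
  rw [Matrix.adjugate_fin_three] at hadj
  apply E3_ext; intro i
  have e0 := congrFun (congrFun hadj 0) 1
  have e1 := congrFun (congrFun hadj 1) 1
  have e2 := congrFun (congrFun hadj 2) 1
  simp only [Matrix.transpose_apply] at e0 e1 e2
  fin_cases i <;>
    simp only [cross3_apply, row3_apply] <;> simp at e0 e1 e2 ⊢ <;>
    [rw [e0]; rw [e1]; rw [e2]] <;> ring

lemma E3_smul_apply (c : ℝ) (x : E3) (j : Fin 3) : (c • x) j = c * x j := rfl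
lemma E3_add_apply (x y : E3) (j : Fin 3) : (x + y) j = x j + y j := rfl
lemma E3_neg_apply (x : E3) (j : Fin 3) : (-x) j = -(x j) := rfl

lemma SO3.expand {P : Matrix (Fin 3) (Fin 3) ℝ} (h : P ∈ SO3) (v : E3) :
    v = ⟪v, row3 P 0⟫ • row3 P 0 + ⟪v, row3 P 1⟫ • row3 P 1 + ⟪v, row3 P 2⟫ • row3 P 2 := by
  have hPt := SO3.transpose_mul h
  have e : ∀ i k : Fin 3,
      P 0 i * P 0 k + P 1 i * P 1 k + P 2 i * P 2 k = if i = k then 1 else 0 := by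
    intro i k
    have := congrFun (congrFun hPt i) k
    simpa [Matrix.mul_apply, Matrix.transpose_apply, Fin.sum_univ_three,
      Matrix.one_apply] using this
  apply E3_ext; intro k
  rw [E3_add_apply, E3_add_apply, E3_smul_apply, E3_smul_apply, E3_smul_apply,
    inner_E3, inner_E3, inner_E3]
  simp only [row3_apply]
  fin_cases k
  · have E0 : P 0 0 * P 0 0 + P 1 0 * P 1 0 + P 2 0 * P 2 0 = 1 := by simpa using e 0 0
    have E1 : P 0 1 * P 0 0 + P 1 1 * P 1 0 + P 2 1 * P 2 0 = 0 := by simpa using e 1 0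
    have E2 : P 0 2 * P 0 0 + P 1 2 * P 1 0 + P 2 2 * P 2 0 = 0 := by simpa using e 2 0
    show v 0 = (v 0 * P 0 0 + v 1 * P 0 1 + v 2 * P 0 2) * P 0 0
        + (v 0 * P 1 0 + v 1 * P 1 1 + v 2 * P 1 2) * P 1 0
        + (v 0 * P 2 0 + v 1 * P 2 1 + v 2 * P 2 2) * P 2 0
    linear_combination (-(v 0)) * E0 + (-(v 1)) * E1 + (-(v 2)) * E2
  · have E0 : P 0 0 * P 0 1 + P 1 0 * P 1 1 + P 2 0 * P 2 1 = 0 := by simpa using e 0 1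
    have E1 : P 0 1 * P 0 1 + P 1 1 * P 1 1 + P 2 1 * P 2 1 = 1 := by simpa using e 1 1
    have E2 : P 0 2 * P 0 1 + P 1 2 * P 1 1 + P 2 2 * P 2 1 = 0 := by simpa using e 2 1
    show v 1 = (v 0 * P 0 0 + v 1 * P 0 1 + v 2 * P 0 2) * P 0 1
        + (v 0 * P 1 0 + v 1 * P 1 1 + v 2 * P 1 2) * P 1 1
        + (v 0 * P 2 0 + v 1 * P 2 1 + v 2 * P 2 2) * P 2 1
    linear_combination (-(v 0)) * E0 + (-(v 1)) * E1 + (-(v 2)) * E2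
  · have E0 : P 0 0 * P 0 2 + P 1 0 * P 1 2 + P 2 0 * P 2 2 = 0 := by simpa using e 0 2
    have E1 : P 0 1 * P 0 2 + P 1 1 * P 1 2 + P 2 1 * P 2 2 = 0 := by simpa using e 1 2
    have E2 : P 0 2 * P 0 2 + P 1 2 * P 1 2 + P 2 2 * P 2 2 = 1 := by simpa using e 2 2
    show v 2 = (v 0 * P 0 0 + v 1 * P 0 1 + v 2 * P 0 2) * P 0 2
        + (v 0 * P 1 0 + v 1 * P 1 1 + v 2 * P 1 2) * P 1 2
        + (v 0 * P 2 0 + v 1 * P 2 1 + v 2 * P 2 2) * P 2 2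
    linear_combination (-(v 0)) * E0 + (-(v 1)) * E1 + (-(v 2)) * E2

def flipM : Matrix (Fin 3) (Fin 3) ℝ := !![-1,0,0; 0,-1,0; 0,0,1]

lemma flipM_mem : flipM ∈ SO3 := by
  constructor
  · ext i j
    simp only [Matrix.mul_apply, Matrix.transpose_apply, Fin.sum_univ_three]
    fin_cases i <;> fin_cases j <;> simp [flipM, Matrix.one_apply, Matrix.vecHead, Matrix.vecTail]
  · simp [flipM, Matrix.det_fin_three]

lemma row3_flip_mul (M : Matrix (Fin 3) (Fin 3) ℝ) :
    row3 (flipM * M) 0 = -row3 M 0 ∧ row3 (flipM * M) 1 = -row3 M 1 ∧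
      row3 (flipM * M) 2 = row3 M 2 := by
  refine ⟨?_, ?_, ?_⟩ <;> apply E3_ext <;> intro j <;>
    rw [row3_apply, Matrix.mul_apply, Fin.sum_univ_three] <;>
    simp [flipM, E3_neg_apply, row3_apply, Matrix.vecHead, Matrix.vecTail]

def RotM (ψ : ℝ) : Matrix (Fin 3) (Fin 3) ℝ :=
  !![cos ψ, sin ψ, 0; -sin ψ, cos ψ, 0; 0, 0, 1]

lemma RotM_zero : RotM 0 = 1 := by
  ext i j
  fin_cases i <;> fin_cases j <;> simp [RotM, Matrix.one_apply, Matrix.vecHead, Matrix.vecTail]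

lemma RotM_mem (ψ : ℝ) : RotM ψ ∈ SO3 := by
  constructor
  · ext i j
    simp only [Matrix.mul_apply, Matrix.transpose_apply, Fin.sum_univ_three]
    fin_cases i <;> fin_cases j <;>
      simp [RotM, Matrix.one_apply, Matrix.vecHead, Matrix.vecTail] <;>
      nlinarith [sin_sq_add_cos_sq ψ]
  · simp [RotM, Matrix.det_fin_three]
    nlinarith [sin_sq_add_cos_sq ψ]

lemma row3_RotM_mul (ψ : ℝ) (P : Matrix (Fin 3) (Fin 3) ℝ) :
    row3 (RotM ψ * P) 0 = cos ψ • row3 P 0 + sin ψ • row3 P 1 ∧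
    row3 (RotM ψ * P) 1 = (-sin ψ) • row3 P 0 + cos ψ • row3 P 1 ∧
    row3 (RotM ψ * P) 2 = row3 P 2 := by
  refine ⟨?_, ?_, ?_⟩ <;> apply E3_ext <;> intro j <;>
    rw [row3_apply, Matrix.mul_apply, Fin.sum_univ_three] <;>
    simp [RotM, E3_add_apply, E3_smul_apply, row3_apply, Matrix.vecHead, Matrix.vecTail] <;> ring

lemma Matrix3_ext_rows {M N : Matrix (Fin 3) (Fin 3) ℝ}
    (h : ∀ i, row3 M i = row3 N i) : M = N := by
  ext i j
  exact congrArg (fun v : E3 => v j) (h i)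

lemma exists_rot {P Q : Matrix (Fin 3) (Fin 3) ℝ} (hP : P ∈ SO3) (hQ : Q ∈ SO3)
    (h2 : row3 Q 2 = row3 P 2) : ∃ ψ : ℝ, |ψ| ≤ π ∧ Q = RotM ψ * P := by
  set c := ⟪row3 Q 0, row3 P 0⟫ with hc
  set s := ⟪row3 Q 0, row3 P 1⟫ with hs
  have hq0p2 : ⟪row3 Q 0, row3 P 2⟫ = 0 := by
    rw [← h2]
    simpa using SO3.inner_rows hQ 0 2
  have hQ0 : row3 Q 0 = c • row3 P 0 + s • row3 P 1 := by
    have h := SO3.expand hP (row3 Q 0)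
    rw [hq0p2, zero_smul, add_zero] at h
    exact h
  have hcs : c ^ 2 + s ^ 2 = 1 := by
    have h1 : ⟪row3 Q 0, row3 Q 0⟫ = (1:ℝ) := by simpa using SO3.inner_rows hQ 0 0
    rw [hQ0] at h1
    simp only [inner_add_add_self, real_inner_smul_left, real_inner_smul_right,
      SO3.inner_rows hP] at h1
    norm_num at h1
    linarith [h1]
  have hQ1 : row3 Q 1 = (-s) • row3 P 0 + c • row3 P 1 := by
    have h10 : cross3 (row3 P 2) (row3 P 0) = row3 P 1 := (SO3.row1_eq hP).symm
    have h21 : cross3 (row3 P 2) (row3 P 1) = -row3 P 0 := by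
      rw [← h10, lagrange3]
      simp only [SO3.inner_rows hP]
      simp
    rw [SO3.row1_eq hQ, h2, hQ0, cross3_add_right, cross3_smul_right, cross3_smul_right,
      h10, h21, smul_neg]
    module
  set z : ℂ := ⟨c, s⟩ with hz
  have habs : ‖z‖ = 1 := by
    rw [Complex.norm_def, Complex.normSq_mk]
    rw [show c * c + s * s = 1 by nlinarith [hcs]]
    exact Real.sqrt_one
  have hz0 : z ≠ 0 := by
    intro h0
    rw [h0] at habs
    simp at habs
  refine ⟨Complex.arg z, Complex.abs_arg_le_pi z, ?_⟩
  have hcos : cos (Complex.arg z) = c := by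
    rw [Complex.cos_arg hz0, habs]
    simp [hz]
  have hsin : sin (Complex.arg z) = s := by
    rw [Complex.sin_arg, habs]
    simp [hz]
  obtain ⟨r0, r1, r2⟩ := row3_RotM_mul (Complex.arg z) P
  apply Matrix3_ext_rows
  intro i
  fin_cases i
  · show row3 Q 0 = row3 (RotM z.arg * P) 0
    rw [r0, hcos, hsin, hQ0]
  · show row3 Q 1 = row3 (RotM z.arg * P) 1
    rw [r1, hcos, hsin, hQ1]
  · show row3 Q 2 = row3 (RotM z.arg * P) 2
    rw [r2, h2]

lemma FTCOn.mono {f f' : ℝ → E3} {a b a' b' : ℝ} (h : FTCOn f f' a b)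
    (h1 : a ≤ a') (h2 : a' ≤ b') (h3 : b' ≤ b) : FTCOn f f' a' b' := by
  have hmem : ∀ x ∈ Set.Icc a' b', x ∈ Set.Icc a b := fun x hx =>
    ⟨h1.trans hx.1, hx.2.trans h3⟩
  have hint : IntervalIntegrable f' volume a' b' :=
    h.1.mono_set (Set.uIcc_subset_uIcc
      (by simp [Set.mem_uIcc]; left; exact ⟨h1, h2.trans h3⟩)
      (by simp [Set.mem_uIcc]; left; exact ⟨h1.trans h2, h3⟩))
  refine ⟨hint, fun t ht => ?_⟩
  have hta := h.2 t (hmem t ht)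
  have ha' := h.2 a' (hmem a' ⟨le_refl a', h2⟩)
  have i1 : IntervalIntegrable f' volume a a' :=
    h.1.mono_set (Set.uIcc_subset_uIcc (by simp [Set.mem_uIcc, le_refl, h1.trans (h2.trans h3)])
      (by simp [Set.mem_uIcc]; left; exact ⟨h1, h2.trans h3⟩))
  have i2 : IntervalIntegrable f' volume a' t :=
    hint.mono_set (Set.uIcc_subset_uIcc (by simp [Set.mem_uIcc, le_refl, h2])
      (by simp [Set.mem_uIcc]; left; exact ⟨ht.1, ht.2⟩))
  rw [hta, ha', ← intervalIntegral.integral_add_adjacent_intervals i1 i2]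
  abel

lemma FTCOn.continuousOn {f f' : ℝ → E3} {a b : ℝ} (h : FTCOn f f' a b) (hab : a ≤ b) :
    ContinuousOn f (Set.Icc a b) := by
  have hc : ContinuousOn (fun t => f a + ∫ s in a..t, f' s) (Set.Icc a b) := by
    apply continuousOn_const.add
    have := intervalIntegral.continuousOn_primitive_interval' h.1 Set.left_mem_uIcc
    rwa [Set.uIcc_of_le hab] at this
  exact hc.congr h.2

lemma FTCOn.neg {f f' : ℝ → E3} {a b : ℝ} (h : FTCOn f f' a b) :
    FTCOn (fun t => -f t) (fun t => -f' t) a b := by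
  refine ⟨h.1.neg, fun t ht => ?_⟩
  show -f t = -f a + ∫ s in a..t, -f' s
  rw [intervalIntegral.integral_neg, h.2 t ht]
  abel

lemma FTCOn.const (v : E3) (a b : ℝ) : FTCOn (fun _ => v) (fun _ => 0) a b := by
  refine ⟨intervalIntegrable_const, fun t ht => by simp⟩

lemma FTCOn.of_hasDerivAt {f f' : ℝ → E3} {a b : ℝ}
    (hd : ∀ t, HasDerivAt f (f' t) t) (hc : Continuous f') : FTCOn f f' a b := by
  refine ⟨hc.intervalIntegrable a b, fun t ht => ?_⟩
  rw [intervalIntegral.integral_eq_sub_of_hasDerivAt (fun x _ => hd x)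
    (hc.intervalIntegrable a t)]
  abel

lemma FTCOn.glue {f g f' g' : ℝ → E3} {a s d : ℝ} (has : a ≤ s) (hsd : s ≤ d)
    (hf : FTCOn f f' a s) (hg : FTCOn g g' s d) (hmatch : f s = g s) :
    FTCOn (fun t => if t ≤ s then f t else g t)
      (fun t => if t ≤ s then f' t else g' t) a d := by
  set F' : ℝ → E3 := fun t => if t ≤ s then f' t else g' t with hF'
  have ias : IntervalIntegrable F' volume a s := by
    apply hf.1.congr
    have : ∀ᵐ x ∂volume.restrict (Set.uIoc a s), x ∈ Set.uIoc a s := ae_restrict_mem measurableSet_uIoc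
    intro x hx
    rw [Set.uIoc_of_le has] at hx
    simp [hF', hx.2]
  have isd : IntervalIntegrable F' volume s d := by
    apply hg.1.congr
    have : ∀ᵐ x ∂volume.restrict (Set.uIoc s d), x ∈ Set.uIoc s d := ae_restrict_mem measurableSet_uIoc
    intro x hx
    rw [Set.uIoc_of_le hsd] at hx
    simp [hF', not_le.mpr hx.1]
  refine ⟨ias.trans isd, fun t ht => ?_⟩
  by_cases hts : t ≤ s
  · simp only [hts, if_pos, if_pos has]
    rw [hf.2 t ⟨ht.1, hts⟩]
    congr 1
    apply intervalIntegral.integral_congr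
    intro x hx
    rw [Set.uIcc_of_le ht.1] at hx
    simp [hF', hx.2.trans hts]
  · push_neg at hts
    have hts' := le_of_lt hts
    have ist : IntervalIntegrable F' volume s t :=
      isd.mono_set (Set.uIcc_subset_uIcc (by simp [Set.mem_uIcc, le_refl, hsd])
        (by simp [Set.mem_uIcc]; left; exact ⟨hts', ht.2⟩))
    have e1 : (∫ x in a..s, F' x) = ∫ x in a..s, f' x := by
      apply intervalIntegral.integral_congr
      intro x hx
      rw [Set.uIcc_of_le has] at hx
      simp [hF', hx.2]
    have e2 : (∫ x in s..t, F' x) = ∫ x in s..t, g' x := by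
      apply intervalIntegral.integral_congr_ae
      apply Filter.Eventually.of_forall
      intro x hx
      rw [Set.uIoc_of_le hts'] at hx
      simp [hF', not_le.mpr hx.1]
    have hsum := intervalIntegral.integral_add_adjacent_intervals ias ist
    simp only [if_neg (not_le.mpr hts), if_pos has]
    rw [hg.2 t ⟨hts', ht.2⟩, ← hmatch, hf.2 s ⟨has, le_refl s⟩, ← hsum, e1, e2]
    abel

lemma ae_ne_pt (s : ℝ) : ∀ᵐ x ∂(volume : Measure ℝ), x ≠ s := by
  refine ae_iff.mpr ?_
  simp only [ne_eq, not_not]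
  rw [show {x : ℝ | x = s} = {s} from rfl]
  exact measure_singleton s

lemma ae_restrict_glue {P : ℝ → Prop} {a s d : ℝ}
    (h1 : ∀ᵐ t ∂volume.restrict (Set.Ioo a s), P t)
    (h2 : ∀ᵐ t ∂volume.restrict (Set.Ioo s d), P t) :
    ∀ᵐ t ∂volume.restrict (Set.Ioo a d), P t := by
  rw [ae_restrict_iff' measurableSet_Ioo] at h1 h2 ⊢
  filter_upwards [h1, h2, ae_ne_pt s] with x hx1 hx2 hxs hxmem
  rcases lt_trichotomy x s with h|h|h
  · exact hx1 ⟨hxmem.1, h⟩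
  · exact absurd h hxs
  · exact hx2 ⟨h, hxmem.2⟩

lemma eqOn_Icc_of_ae_eq {f g : ℝ → E3} {a b : ℝ} (hab : a < b)
    (hf : ContinuousOn f (Set.Icc a b)) (hg : ContinuousOn g (Set.Icc a b))
    (h : ∀ᵐ t ∂volume.restrict (Set.Ioo a b), f t = g t) :
    ∀ t ∈ Set.Icc a b, f t = g t := by
  rw [ae_restrict_iff' measurableSet_Ioo] at h
  intro t ht
  by_contra hne
  have hc : ContinuousWithinAt (fun x => f x - g x) (Set.Icc a b) t :=
    (hf t ht).sub (hg t ht)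
  have hmem : {y : E3 | y ≠ 0} ∈ 𝓝 (f t - g t) :=
    isOpen_ne.mem_nhds (sub_ne_zero.mpr hne)
  have hev : {x : ℝ | f x - g x ≠ 0} ∈ 𝓝[Set.Icc a b] t := hc hmem
  obtain ⟨U, hUopen, htU, hUsub⟩ := mem_nhdsWithin.mp hev
  obtain ⟨δ, hδ, hball⟩ := Metric.isOpen_iff.mp hUopen t htU
  set u := max a (t - δ) with hu
  set v := min b (t + δ) with hv
  have huv : u < v := by
    rcases ht with ⟨h1, h2⟩
    apply max_lt <;> [skip; skip] <;> apply lt_min <;> linarith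
  have hJsub : Set.Ioo u v ⊆ {x | ¬ (x ∈ Set.Ioo a b → f x = g x)} := by
    intro x hx
    have hxIoo : x ∈ Set.Ioo a b := ⟨(le_max_left _ _).trans_lt hx.1,
      hx.2.trans_le (min_le_left _ _)⟩
    have hxball : x ∈ Metric.ball t δ := by
      rw [Real.ball_eq_Ioo]
      exact ⟨(le_max_right _ _).trans_lt hx.1, hx.2.trans_le (min_le_right _ _)⟩
    have hxU : x ∈ U := hball hxball
    have : f x - g x ≠ 0 := hUsub ⟨hxU, Set.Ioo_subset_Icc_self hxIoo⟩
    intro hcon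
    exact this (sub_eq_zero.mpr (hcon hxIoo))
  have h0 : volume (Set.Ioo u v) = 0 :=
    measure_mono_null hJsub (ae_iff.mp h)
  rw [Real.volume_Ioo] at h0
  simp only [ENNReal.ofReal_eq_zero] at h0
  linarith

lemma const_of_ae_deriv_zero {β β' : ℝ → E3} {a d b m : ℝ}
    (hβ : IntervalIntegrable β' volume a d ∧
      ∀ t ∈ Set.Icc a d, β t = β a + ∫ s in a..t, β' s)
    (hab : a ≤ b) (hbm : b ≤ m) (hmd : m ≤ d)
    (hz : ∀ᵐ t ∂volume.restrict (Set.Ioo b m), β' t = 0) :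
    ∀ t ∈ Set.Icc b m, β t = β b := by
  intro t ht
  have hfb := hβ.2 b ⟨hab, hbm.trans hmd⟩
  have hft := hβ.2 t ⟨hab.trans ht.1, ht.2.trans hmd⟩
  have i1 : IntervalIntegrable β' volume a b :=
    hβ.1.mono_set (Set.uIcc_subset_uIcc (by simp [Set.mem_uIcc, le_refl, hab.trans (hbm.trans hmd)])
      (by simp [Set.mem_uIcc]; left; exact ⟨hab, hbm.trans hmd⟩))
  have i2 : IntervalIntegrable β' volume b t :=
    hβ.1.mono_set (Set.uIcc_subset_uIcc (by simp [Set.mem_uIcc]; left; exact ⟨hab, hbm.trans hmd⟩)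
      (by simp [Set.mem_uIcc]; left; exact ⟨hab.trans ht.1, ht.2.trans hmd⟩))
  have hzero : (∫ s in b..t, β' s) = 0 := by
    rw [ae_restrict_iff' measurableSet_Ioo] at hz
    have : (∫ s in b..t, β' s) = ∫ s in b..t, (0:E3) := by
      apply intervalIntegral.integral_congr_ae
      filter_upwards [hz, ae_ne_pt t] with x hx hxt hmem
      rw [Set.uIoc_of_le ht.1] at hmem
      exact hx ⟨hmem.1, lt_of_le_of_ne hmem.2 hxt |>.trans_le ht.2⟩
    rw [this, intervalIntegral.integral_zero]
  rw [hft, hfb, ← intervalIntegral.integral_add_adjacent_intervals i1 i2, hzero]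
  abel

end Aux


lemma inner_combo {P : Matrix (Fin 3) (Fin 3) ℝ} (hP : P ∈ SO3) (x1 y1 x2 y2 : ℝ) :
    ⟪x1 • row3 P 0 + y1 • row3 P 1, x2 • row3 P 0 + y2 • row3 P 1⟫ = x1*x2 + y1*y2 := by
  simp only [inner_add_left, inner_add_right, real_inner_smul_left, real_inner_smul_right,
    SO3.inner_rows hP]
  norm_num
  ring

lemma AdaptedFrameW11.mono {β β' : ℝ → E3} {a b a' b' : ℝ}
    {r : ℝ → Matrix (Fin 3) (Fin 3) ℝ} {ρ' : Fin 3 → ℝ → E3}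
    (h : AdaptedFrameW11 β β' a b r ρ') (h1 : a ≤ a') (h2 : a' ≤ b') (h3 : b' ≤ b) :
    AdaptedFrameW11 β β' a' b' r ρ' := by
  refine ⟨fun i => (h.1 i).mono h1 h2 h3,
    fun t ht => h.2.1 t ⟨h1.trans ht.1, ht.2.trans h3⟩,
    ae_restrict_of_ae_restrict_of_subset (Set.Ioo_subset_Ioo h1 h3) h.2.2.1,
    ae_restrict_of_ae_restrict_of_subset (Set.Ioo_subset_Ioo h1 h3) h.2.2.2⟩

lemma flipFrame {β β' : ℝ → E3} {a b : ℝ} {r : ℝ → Matrix (Fin 3) (Fin 3) ℝ}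
    {ρ' : Fin 3 → ℝ → E3} {κ : ℝ → ℝ}
    (h : AdaptedFrameW11 β β' a b r ρ')
    (hκ : ∀ᵐ t ∂volume.restrict (Set.Ioo a b), ⟪ρ' 0 t, row3 (r t) 1⟫ = κ t) :
    AdaptedFrameW11 β β' a b (fun t => flipM * r t)
      (fun i t => if i = 2 then ρ' 2 t else -(ρ' i t)) ∧
    ∀ᵐ t ∂volume.restrict (Set.Ioo a b),
      ⟪(if (0:Fin 3) = 2 then ρ' 2 t else -(ρ' 0 t)), row3 (flipM * r t) 1⟫ = κ t := by
  have e0 : ∀ M, row3 (flipM * M) 0 = -row3 M 0 := fun M => (row3_flip_mul M).1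
  have e1 : ∀ M, row3 (flipM * M) 1 = -row3 M 1 := fun M => (row3_flip_mul M).2.1
  have e2 : ∀ M, row3 (flipM * M) 2 = row3 M 2 := fun M => (row3_flip_mul M).2.2
  constructor
  · refine ⟨?_, fun t ht => SO3.mul_mem flipM_mem (h.2.1 t ht), ?_, ?_⟩
    · have F0 : FTCOn (fun t => row3 (flipM * r t) 0) (fun t => -(ρ' 0 t)) a b := by
        have hh : (fun t => row3 (flipM * r t) 0) = (fun t => -(row3 (r t) 0)) :=
          funext fun t => e0 (r t)
        rw [hh]; exact (h.1 0).neg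
      have F1 : FTCOn (fun t => row3 (flipM * r t) 1) (fun t => -(ρ' 1 t)) a b := by
        have hh : (fun t => row3 (flipM * r t) 1) = (fun t => -(row3 (r t) 1)) :=
          funext fun t => e1 (r t)
        rw [hh]; exact (h.1 1).neg
      have F2 : FTCOn (fun t => row3 (flipM * r t) 2) (fun t => ρ' 2 t) a b := by
        have hh : (fun t => row3 (flipM * r t) 2) = (fun t => row3 (r t) 2) :=
          funext fun t => e2 (r t)
        rw [hh]; exact h.1 2
      intro i
      fin_cases i
      · exact F0
      · exact F1
      · exact F2
    · filter_upwards [h.2.2.1] with t ht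
      rw [e2, ht]
    · filter_upwards [h.2.2.2] with t ht
      rw [e0, cross3_neg_right, ht, neg_zero]
  · filter_upwards [hκ] with t ht
    simp only [show ¬((0:Fin 3) = 2) by simp, if_false]
    rw [e1, inner_neg_neg, ht]

lemma transFrame {β β' : ℝ → E3} {b m : ℝ} (hbm : b < m) {P : Matrix (Fin 3) (Fin 3) ℝ}
    (hP : P ∈ SO3) (ψ : ℝ)
    (hβ2 : ∀ t ∈ Set.Icc b m, β t = β b)
    (hProw2 : row3 P 2 = β b)
    (hz : ∀ᵐ t ∂volume.restrict (Set.Ioo b m), β' t = 0) :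
    ∃ ρA : Fin 3 → ℝ → E3,
      AdaptedFrameW11 β β' b m (fun t => RotM (ψ/(m-b) * (t-b)) * P) ρA ∧
      ∀ᵐ t ∂volume.restrict (Set.Ioo b m),
        ⟪ρA 0 t, row3 (RotM (ψ/(m-b) * (t-b)) * P) 1⟫ = (fun _ => ψ/(m-b)) t := by
  set ω := ψ/(m-b) with hω
  set θ : ℝ → ℝ := fun t => ω * (t - b) with hθdef
  have hθ : ∀ t, HasDerivAt θ ω t := by
    intro t
    simpa using ((hasDerivAt_id t).sub_const b).const_mul ω
  refine ⟨fun i t => if i = 0 then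
      (-Real.sin (θ t) * ω) • row3 P 0 + (Real.cos (θ t) * ω) • row3 P 1
    else if i = 1 then
      (-(Real.cos (θ t) * ω)) • row3 P 0 + (-Real.sin (θ t) * ω) • row3 P 1
    else 0, ⟨?_, fun t ht => SO3.mul_mem (RotM_mem _) hP, ?_, ?_⟩, ?_⟩
  · have F0 : FTCOn (fun t => row3 (RotM (θ t) * P) 0)
        (fun t => (-Real.sin (θ t) * ω) • row3 P 0 + (Real.cos (θ t) * ω) • row3 P 1) b m := by
      have hfn : (fun t => row3 (RotM (θ t) * P) 0) =
          (fun t => Real.cos (θ t) • row3 P 0 + Real.sin (θ t) • row3 P 1) :=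
        funext fun t => (row3_RotM_mul (θ t) P).1
      rw [hfn]
      apply FTCOn.of_hasDerivAt
      · intro t
        exact (((hθ t).cos).smul_const (row3 P 0)).add (((hθ t).sin).smul_const (row3 P 1))
      · apply Continuous.add
        · exact (((Real.continuous_sin.comp ((continuous_const.mul (continuous_id.sub continuous_const) : Continuous fun x : ℝ => ω * (x - b)))).neg).mul continuous_const).smul continuous_const
        · exact (((Real.continuous_cos.comp ((continuous_const.mul (continuous_id.sub continuous_const) : Continuous fun x : ℝ => ω * (x - b))))).mul continuous_const).smul continuous_const
    have F1 : FTCOn (fun t => row3 (RotM (θ t) * P) 1)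
        (fun t => (-(Real.cos (θ t) * ω)) • row3 P 0 + (-Real.sin (θ t) * ω) • row3 P 1) b m := by
      have hfn : (fun t => row3 (RotM (θ t) * P) 1) =
          (fun t => (-Real.sin (θ t)) • row3 P 0 + Real.cos (θ t) • row3 P 1) :=
        funext fun t => (row3_RotM_mul (θ t) P).2.1
      rw [hfn]
      apply FTCOn.of_hasDerivAt
      · intro t
        exact ((((hθ t).sin).neg).smul_const (row3 P 0)).add (((hθ t).cos).smul_const (row3 P 1))
      · apply Continuous.add
        · exact (((Real.continuous_cos.comp ((continuous_const.mul (continuous_id.sub continuous_const) : Continuous fun x : ℝ => ω * (x - b)))).mul continuous_const).neg).smul continuous_const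
        · exact (((Real.continuous_sin.comp ((continuous_const.mul (continuous_id.sub continuous_const) : Continuous fun x : ℝ => ω * (x - b)))).neg).mul continuous_const).smul continuous_const
    have F2 : FTCOn (fun t => row3 (RotM (θ t) * P) 2) (fun _ => (0:E3)) b m := by
      have hfn : (fun t => row3 (RotM (θ t) * P) 2) = (fun _ => row3 P 2) :=
        funext fun t => (row3_RotM_mul (θ t) P).2.2
      rw [hfn]
      exact FTCOn.const _ _ _
    intro i
    fin_cases i
    · exact F0
    · exact F1
    · exact F2
  · filter_upwards [ae_restrict_mem measurableSet_Ioo] with t ht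
    rw [(row3_RotM_mul (θ t) P).2.2, hProw2, hβ2 t (Set.Ioo_subset_Icc_self ht)]
  · filter_upwards [hz] with t ht
    rw [ht, cross3_zero_left]
  · apply Filter.Eventually.of_forall
    intro t
    show ⟪(-Real.sin (θ t) * ω) • row3 P 0 + (Real.cos (θ t) * ω) • row3 P 1,
      row3 (RotM (θ t) * P) 1⟫ = ω
    rw [(row3_RotM_mul (θ t) P).2.1,
      show (-Real.sin (θ t) : ℝ) • row3 P 0 + Real.cos (θ t) • row3 P 1
        = (-Real.sin (θ t) : ℝ) • row3 P 0 + (Real.cos (θ t)) • row3 P 1 from rfl,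
      inner_combo hP]
    linear_combination ω * Real.sin_sq_add_cos_sq (θ t)


lemma pglue {β β' : ℝ → E3} {a s d : ℝ} {r r₂ : ℝ → Matrix (Fin 3) (Fin 3) ℝ}
    {ρ' ρ₂' : Fin 3 → ℝ → E3} {κ₁ κ₂ : ℝ → ℝ}
    (has : a ≤ s) (hsd : s ≤ d)
    (h1 : AdaptedFrameW11 β β' a s r ρ')
    (h2 : AdaptedFrameW11 β β' s d r₂ ρ₂')
    (hmatch : r s = r₂ s)
    (hκ1 : ∀ᵐ t ∂volume.restrict (Set.Ioo a s), ⟪ρ' 0 t, row3 (r t) 1⟫ = κ₁ t)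
    (hκ2 : ∀ᵐ t ∂volume.restrict (Set.Ioo s d), ⟪ρ₂' 0 t, row3 (r₂ t) 1⟫ = κ₂ t) :
    AdaptedFrameW11 β β' a d (fun t => if t ≤ s then r t else r₂ t)
      (fun i t => if t ≤ s then ρ' i t else ρ₂' i t) ∧
    ∀ᵐ t ∂volume.restrict (Set.Ioo a d),
      ⟪(if t ≤ s then ρ' 0 t else ρ₂' 0 t),
        row3 (if t ≤ s then r t else r₂ t) 1⟫ =
        (if t ≤ s then κ₁ t else κ₂ t) := by
  constructor
  · refine ⟨?_, ?_, ?_, ?_⟩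
    · intro i
      have hh : (fun t => row3 (if t ≤ s then r t else r₂ t) i)
          = (fun t => if t ≤ s then row3 (r t) i else row3 (r₂ t) i) := by
        funext t
        by_cases h : t ≤ s <;> simp [h]
      rw [hh]
      exact FTCOn.glue has hsd (h1.1 i) (h2.1 i) (by show row3 (r s) i = row3 (r₂ s) i; rw [hmatch])
    · intro t ht
      show (if t ≤ s then r t else r₂ t) ∈ SO3
      by_cases h : t ≤ s
      · rw [if_pos h]; exact h1.2.1 t ⟨ht.1, h⟩
      · rw [if_neg h]; exact h2.2.1 t ⟨(not_le.mp h).le, ht.2⟩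
    · apply ae_restrict_glue (s := s)
      · filter_upwards [h1.2.2.1, ae_restrict_mem measurableSet_Ioo] with t h ht
        rw [if_pos ht.2.le]; exact h
      · filter_upwards [h2.2.2.1, ae_restrict_mem measurableSet_Ioo] with t h ht
        rw [if_neg (not_le.mpr ht.1)]; exact h
    · apply ae_restrict_glue (s := s)
      · filter_upwards [h1.2.2.2, ae_restrict_mem measurableSet_Ioo] with t h ht
        rw [if_pos ht.2.le]; exact h
      · filter_upwards [h2.2.2.2, ae_restrict_mem measurableSet_Ioo] with t h ht
        rw [if_neg (not_le.mpr ht.1)]; exact h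
  · apply ae_restrict_glue (s := s)
    · filter_upwards [hκ1, ae_restrict_mem measurableSet_Ioo] with t h ht
      simp only [if_pos ht.2.le]; exact h
    · filter_upwards [hκ2, ae_restrict_mem measurableSet_Ioo] with t h ht
      simp only [if_neg (not_le.mpr ht.1)]; exact h

lemma glueBdd {β β' : ℝ → E3} {a b c d : ℝ}
    (hβ : FTCOn β β' a d) (hab : a ≤ b) (hbc : b < c) (hcd : c ≤ d)
    (h1 : BddGeodCurvOn β β' a c) (h2 : BddGeodCurvOn β β' b d) :
    BddGeodCurvOn β β' a d := by
  obtain ⟨κ₁, C₁, hC₁, r, ρ', hfr1, hκ1⟩ := h1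
  obtain ⟨κ₂, C₂, hC₂, r2, ρ2', hfr2, hκ2⟩ := h2
  set m := (b+c)/2 with hm
  have hbm : b < m := by rw [hm]; linarith
  have hmc : m < c := by rw [hm]; linarith
  have hac : a ≤ c := hab.trans hbc.le
  have hbd : b ≤ d := hbc.le.trans hcd
  have had : a ≤ d := hac.trans hcd
  have hmd : m ≤ d := hmc.le.trans hcd
  have hrc : ∀ i, ContinuousOn (fun t => row3 (r t) i) (Set.Icc a c) :=
    fun i => (hfr1.1 i).continuousOn hac
  have hrc2 : ∀ i, ContinuousOn (fun t => row3 (r2 t) i) (Set.Icc b d) :=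
    fun i => (hfr2.1 i).continuousOn hbd
  have hβc : ContinuousOn β (Set.Icc a d) := hβ.continuousOn had
  have hrow2 : ∀ t ∈ Set.Icc a c, row3 (r t) 2 = β t :=
    eqOn_Icc_of_ae_eq (lt_of_le_of_lt hab hbc) (hrc 2)
      (hβc.mono (Set.Icc_subset_Icc le_rfl hcd)) hfr1.2.2.1
  have hrow2' : ∀ t ∈ Set.Icc b d, row3 (r2 t) 2 = β t :=
    eqOn_Icc_of_ae_eq (lt_of_lt_of_le hbc hcd) (hrc2 2)
      (hβc.mono (Set.Icc_subset_Icc hab le_rfl)) hfr2.2.2.1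
  by_cases hN : volume {t | t ∈ Set.Ioo b m ∧ β' t ≠ 0} = 0
  · -- Case B : β' vanishes a.e. on (b, m); use a transition frame
    have hz : ∀ᵐ t ∂volume.restrict (Set.Ioo b m), β' t = 0 := by
      rw [ae_restrict_iff' measurableSet_Ioo, ae_iff]
      apply measure_mono_null _ hN
      intro x hx
      simp only [Set.mem_setOf_eq] at hx ⊢
      exact ⟨Classical.byContradiction fun h => hx fun h2 => absurd h2 h,
        fun h => hx fun _ => h⟩
    have hconst : ∀ t ∈ Set.Icc b m, β t = β b :=
      const_of_ae_deriv_zero ⟨hβ.1, hβ.2⟩ hab hbm.le hmd hz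
    have hP : r b ∈ SO3 := hfr1.2.1 b ⟨hab, hbc.le⟩
    have hQ : r2 m ∈ SO3 := hfr2.2.1 m ⟨hbm.le, hmd⟩
    have hProw2 : row3 (r b) 2 = β b := hrow2 b ⟨hab, hbc.le⟩
    have hQrow2 : row3 (r2 m) 2 = row3 (r b) 2 := by
      rw [hProw2, hrow2' m ⟨hbm.le, hmd⟩]
      exact hconst m ⟨hbm.le, le_rfl⟩
    obtain ⟨ψ, hψpi, hQRot⟩ := exists_rot hP hQ hQrow2
    obtain ⟨ρA, hframeA, hκA⟩ := transFrame hbm hP ψ hconst hProw2 hz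
    have hmatch1 : r b = RotM (ψ/(m-b) * (b-b)) * (r b) := by
      rw [sub_self, mul_zero, RotM_zero, one_mul]
    obtain ⟨hframe1, hκc1⟩ := pglue hab hbm.le
      (hfr1.mono le_rfl hab hbc.le) hframeA hmatch1
      (ae_restrict_of_ae_restrict_of_subset (Set.Ioo_subset_Ioo le_rfl hbc.le) hκ1)
      hκA
    have hmatch2 : (fun t => if t ≤ b then r t else RotM (ψ/(m-b) * (t-b)) * (r b)) m
        = r2 m := by
      simp only [if_neg (not_le.mpr hbm)]
      rw [div_mul_cancel₀ _ (by linarith : m - b ≠ 0), ← hQRot]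
    obtain ⟨hframe2, hκc2⟩ := pglue (hab.trans hbm.le) hmd
      hframe1 (hfr2.mono hbm.le hmd le_rfl) hmatch2
      hκc1
      (ae_restrict_of_ae_restrict_of_subset (Set.Ioo_subset_Ioo hbm.le le_rfl) hκ2)
    refine ⟨_, max (max C₁ C₂) |ψ/(m-b)|, ?_, _, _, hframe2, hκc2⟩
    -- bound
    apply ae_restrict_glue (s := m)
    · apply ae_restrict_glue (s := b)
      · filter_upwards [ae_restrict_of_ae_restrict_of_subset
          (Set.Ioo_subset_Ioo le_rfl hbc.le) hC₁, ae_restrict_mem measurableSet_Ioo]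
          with t h ht
        rw [if_pos (ht.2.trans hbm).le, if_pos ht.2.le]
        exact h.trans (le_max_of_le_left (le_max_left _ _))
      · filter_upwards [ae_restrict_mem measurableSet_Ioo] with t ht
        rw [if_pos ht.2.le, if_neg (not_le.mpr ht.1)]
        exact le_max_of_le_right le_rfl
    · filter_upwards [ae_restrict_of_ae_restrict_of_subset
        (Set.Ioo_subset_Ioo hbm.le le_rfl) hC₂, ae_restrict_mem measurableSet_Ioo]
        with t h ht
      rw [if_neg (not_le.mpr ht.1)]
      exact h.trans (le_max_of_le_left (le_max_right _ _))
  · -- Case A : there is a point s in (b,m) where both frames are tangent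
    have hcr1 : ∀ᵐ x ∂(volume : Measure ℝ), x ∈ Set.Ioo b m →
        cross3 (β' x) (row3 (r x) 0) = 0 := by
      rw [← ae_restrict_iff' measurableSet_Ioo]
      exact ae_restrict_of_ae_restrict_of_subset (Set.Ioo_subset_Ioo hab hmc.le) hfr1.2.2.2
    have hcr2 : ∀ᵐ x ∂(volume : Measure ℝ), x ∈ Set.Ioo b m →
        cross3 (β' x) (row3 (r2 x) 0) = 0 := by
      rw [← ae_restrict_iff' measurableSet_Ioo]
      exact ae_restrict_of_ae_restrict_of_subset (Set.Ioo_subset_Ioo le_rfl hmd) hfr2.2.2.2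
    have hBad : volume {x : ℝ | ¬(x ∈ Set.Ioo b m →
        cross3 (β' x) (row3 (r x) 0) = 0 ∧ cross3 (β' x) (row3 (r2 x) 0) = 0)} = 0 := by
      apply ae_iff.mp
      filter_upwards [hcr1, hcr2] with x h1x h2x hx
      exact ⟨h1x hx, h2x hx⟩
    have hns : ¬ ({t | t ∈ Set.Ioo b m ∧ β' t ≠ 0} ⊆ {x : ℝ | ¬(x ∈ Set.Ioo b m →
        cross3 (β' x) (row3 (r x) 0) = 0 ∧ cross3 (β' x) (row3 (r2 x) 0) = 0)}) :=
      fun hsub => hN (measure_mono_null hsub hBad)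
    obtain ⟨s, hsN, hsBad⟩ := Set.not_subset.mp hns
    obtain ⟨hsIoo, hsne⟩ := hsN
    obtain ⟨hcr1s, hcr2s⟩ := (not_not.mp hsBad) hsIoo
    have hsacc : s ∈ Set.Icc a c := ⟨hab.trans hsIoo.1.le, hsIoo.2.le.trans hmc.le⟩
    have hsbd : s ∈ Set.Icc b d := ⟨hsIoo.1.le, hsIoo.2.le.trans hmd⟩
    have has : a ≤ s := hsacc.1
    have hsd : s ≤ d := hsbd.2
    have hsc : s ≤ c := hsacc.2
    have hbs : b ≤ s := hsbd.1
    have hrS : r s ∈ SO3 := hfr1.2.1 s hsacc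
    have hr2S : r2 s ∈ SO3 := hfr2.2.1 s hsbd
    have hrow2s : row3 (r s) 2 = β s := hrow2 s hsacc
    have hrow2s' : row3 (r2 s) 2 = β s := hrow2' s hsbd
    have h1col := collinear_of_cross3 _ _ hsne hcr1s
    have h2col := collinear_of_cross3 _ _ hsne hcr2s
    have huu : (0:ℝ) < ⟪β' s, β' s⟫ := by
      rw [real_inner_self_eq_norm_sq]
      have := norm_pos_iff.mpr hsne
      positivity
    have hnorm1 : ⟪row3 (r s) 0, row3 (r s) 0⟫ = (1:ℝ) := by
      simpa using SO3.inner_rows hrS 0 0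
    have hnorm2 : ⟪row3 (r2 s) 0, row3 (r2 s) 0⟫ = (1:ℝ) := by
      simpa using SO3.inner_rows hr2S 0 0
    set c₁ : ℝ := ⟪β' s, row3 (r s) 0⟫ / ⟪β' s, β' s⟫ with hc₁
    set c₂ : ℝ := ⟪β' s, row3 (r2 s) 0⟫ / ⟪β' s, β' s⟫ with hc₂
    have hsq1 : c₁^2 * ⟪β' s, β' s⟫ = 1 := by
      have h := hnorm1
      rw [h1col, real_inner_smul_left, real_inner_smul_right] at h
      linear_combination h
    have hsq2 : c₂^2 * ⟪β' s, β' s⟫ = 1 := by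
      have h := hnorm2
      rw [h2col, real_inner_smul_left, real_inner_smul_right] at h
      linear_combination h
    have hcc : c₁ = c₂ ∨ c₁ = -c₂ := by
      have h0 : (c₁ - c₂) * (c₁ + c₂) * ⟪β' s, β' s⟫ = 0 := by
        linear_combination hsq1 - hsq2
      rcases mul_eq_zero.mp h0 with h | h
      · rcases mul_eq_zero.mp h with h | h
        · left; linarith
        · right; linarith
      · exact absurd h (ne_of_gt huu)
    have key : ∃ (Q2 : ℝ → Matrix (Fin 3) (Fin 3) ℝ) (ρQ2 : Fin 3 → ℝ → E3),
        AdaptedFrameW11 β β' s d Q2 ρQ2 ∧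
        (∀ᵐ t ∂volume.restrict (Set.Ioo s d), ⟪ρQ2 0 t, row3 (Q2 t) 1⟫ = κ₂ t) ∧
        r s = Q2 s := by
      rcases hcc with hcase | hcase
      · refine ⟨r2, ρ2', hfr2.mono hbs hsd le_rfl,
          ae_restrict_of_ae_restrict_of_subset (Set.Ioo_subset_Ioo hbs le_rfl) hκ2, ?_⟩
        have hrow0eq : row3 (r s) 0 = row3 (r2 s) 0 := by
          rw [h1col, h2col, hcase]
        apply Matrix3_ext_rows
        intro i
        fin_cases i
        · exact hrow0eq
        · show row3 (r s) 1 = row3 (r2 s) 1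
          rw [SO3.row1_eq hrS, SO3.row1_eq hr2S, hrow2s, hrow2s', hrow0eq]
        · show row3 (r s) 2 = row3 (r2 s) 2
          rw [hrow2s, hrow2s']
      · obtain ⟨hfF, hκF⟩ := flipFrame (hfr2.mono hbs hsd le_rfl)
          (ae_restrict_of_ae_restrict_of_subset (Set.Ioo_subset_Ioo hbs le_rfl) hκ2)
        refine ⟨fun t => flipM * r2 t, fun i t => if i = 2 then ρ2' 2 t else -(ρ2' i t),
          hfF, hκF, ?_⟩
        have hrow0neg : row3 (r s) 0 = -row3 (r2 s) 0 := by
          rw [h1col, h2col, hcase, neg_smul]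
        have hflipS : flipM * r2 s ∈ SO3 := SO3.mul_mem flipM_mem hr2S
        apply Matrix3_ext_rows
        intro i
        fin_cases i
        · show row3 (r s) 0 = row3 (flipM * r2 s) 0
          rw [(row3_flip_mul (r2 s)).1, hrow0neg]
        · show row3 (r s) 1 = row3 (flipM * r2 s) 1
          rw [SO3.row1_eq hrS, SO3.row1_eq hflipS, (row3_flip_mul (r2 s)).2.2,
            (row3_flip_mul (r2 s)).1, hrow2s, hrow2s', hrow0neg]
        · show row3 (r s) 2 = row3 (flipM * r2 s) 2
          rw [(row3_flip_mul (r2 s)).2.2, hrow2s, hrow2s']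
    obtain ⟨Q2, ρQ2, hfQ, hκQ, hmQ⟩ := key
    obtain ⟨hframe, hκc⟩ := pglue has hsd (hfr1.mono le_rfl has hsc) hfQ hmQ
      (ae_restrict_of_ae_restrict_of_subset (Set.Ioo_subset_Ioo le_rfl hsc) hκ1) hκQ
    refine ⟨_, max C₁ C₂, ?_, _, _, hframe, hκc⟩
    apply ae_restrict_glue (s := s)
    · filter_upwards [ae_restrict_of_ae_restrict_of_subset
        (Set.Ioo_subset_Ioo le_rfl hsc) hC₁, ae_restrict_mem measurableSet_Ioo]
        with t h ht
      rw [if_pos ht.2.le]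
      exact h.trans (le_max_left _ _)
    · filter_upwards [ae_restrict_of_ae_restrict_of_subset
        (Set.Ioo_subset_Ioo hbs le_rfl) hC₂, ae_restrict_mem measurableSet_Ioo]
        with t h ht
      rw [if_neg (not_le.mpr ht.1)]
      exact h.trans (le_max_right _ _)

/-- Having bounded geodesic curvature is a local property: if
`β ∈ W^{1,1}(I, S²)` has bounded geodesic curvature in a neighbourhood (in `[0,1]`) of every
point of `[0,1]`, then it has bounded geodesic curvature on `I`. -/
theorem statement6
    (β β' : ℝ → E3) (hβ : FTCOn β β' 0 1)
    (hsphere : ∀ t ∈ Set.Icc (0:ℝ) 1, ‖β t‖ = 1)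
    (hloc : ∀ t₀ ∈ Set.Icc (0:ℝ) 1, ∃ ε > (0:ℝ),
      BddGeodCurvOn β β' (max 0 (t₀ - ε)) (min 1 (t₀ + ε))) :
    BddGeodCurvOn β β' 0 1 := by
  classical
  set S := {x : ℝ | x ∈ Set.Ioc (0:ℝ) 1 ∧ BddGeodCurvOn β β' 0 x} with hS
  obtain ⟨ε₀, hε₀, h0⟩ := hloc 0 ⟨le_rfl, zero_le_one⟩
  rw [show max 0 (0 - ε₀) = 0 by rw [zero_sub]; exact max_eq_left (by linarith),
    zero_add] at h0
  set x₀ := min 1 ε₀ with hx₀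
  have hx₀pos : 0 < x₀ := lt_min one_pos hε₀
  have hx₀S : x₀ ∈ S := ⟨⟨hx₀pos, min_le_left 1 ε₀⟩, h0⟩
  have hSne : S.Nonempty := ⟨x₀, hx₀S⟩
  have hbddS : BddAbove S := ⟨1, fun x hx => hx.1.2⟩
  set x₁ := sSup S with hx₁
  have hx₁ge : x₀ ≤ x₁ := le_csSup hbddS hx₀S
  have hx₁pos : 0 < x₁ := lt_of_lt_of_le hx₀pos hx₁ge
  have hx₁le : x₁ ≤ 1 := csSup_le hSne (fun x hx => hx.1.2)
  obtain ⟨ε, hε, hB⟩ := hloc x₁ ⟨hx₁pos.le, hx₁le⟩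
  have hmin : 0 < min ε x₀ := lt_min hε hx₀pos
  obtain ⟨y, hyS, hy⟩ := exists_lt_of_lt_csSup hSne
    (show x₁ - min ε x₀ < x₁ by linarith)
  have hyx₁ : y ≤ x₁ := le_csSup hbddS hyS
  have hy1 : y ≤ 1 := hyS.1.2
  have hy0 : 0 < y := hyS.1.1
  have hbc : max 0 (x₁ - ε) < y := by
    apply max_lt hy0
    have : min ε x₀ ≤ ε := min_le_left _ _
    linarith
  have hcd : y ≤ min 1 (x₁ + ε) := le_min hy1 (by linarith)
  have hd1 : min 1 (x₁ + ε) ≤ 1 := min_le_left _ _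
  have hd0 : (0:ℝ) ≤ min 1 (x₁ + ε) := le_min zero_le_one (by linarith)
  have hglue : BddGeodCurvOn β β' 0 (min 1 (x₁ + ε)) :=
    glueBdd (hβ.mono le_rfl hd0 hd1) (le_max_left 0 _) hbc hcd hyS.2 hB
  rcases le_or_gt 1 (x₁ + ε) with hcase | hcase
  · rwa [min_eq_left hcase] at hglue
  · exfalso
    rw [min_eq_right hcase.le] at hglue
    have hmemS : x₁ + ε ∈ S := ⟨⟨by linarith, hcase.le⟩, hglue⟩
    have := le_csSup hbddS hmemS
    linarith
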